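/- Let Q(X) = X^3 + aX^2 + bX + 1 ∈ ℤ[X] be irreducible with a real root α, |α| > 1, and nonreal roots β, β̄. Then β/β̄ is not a root of unity. -/

import Mathlib

open Polynomial in
/-- If `X^3 + aX^2 + bX + 1 ∈ ℤ[X]` is irreducible, with a real root `α`,
`|α| > 1`, and nonreal roots `β, β̄`, then `β/β̄` is not a root of unity. -/
theorem stmt_2 (a b : ℤ) (α : ℝ) (β : ℂ)
    (hirr : Irreducible (X ^ 3 + C a * X ^ 2 + C b * X + 1 : Polynomial ℤ))
    (hα : |α| > 1) (hβ : β.im ≠ 0)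
    (hfac : ∀ x : ℂ, x ^ 3 + (a : ℂ) * x ^ 2 + (b : ℂ) * x + 1
      = (x - (α : ℂ)) * (x - β) * (x - (starRingEnd ℂ) β)) :
    ¬ ∃ k : ℕ, 0 < k ∧ (β / (starRingEnd ℂ) β) ^ k = 1 := by
  rintro ⟨k, hk, hroot⟩
  have hβ0 : β ≠ 0 := fun h => hβ (by simp [h])
  have hγ0 : (starRingEnd ℂ) β ≠ 0 := by simpa using hβ0
  -- product of roots
  have hprod : (α : ℂ) * (β * (starRingEnd ℂ) β) = -1 := by
    have h0 := hfac 0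
    linear_combination h0
  have hprodR : α * Complex.normSq β = -1 := by
    have := hprod
    rw [Complex.mul_conj] at this
    exact_mod_cast this
  have hnsq_pos : 0 < Complex.normSq β := Complex.normSq_pos.mpr hβ0
  have hαneg : α < 0 := by nlinarith
  have hnsq_lt : Complex.normSq β < 1 := by
    nlinarith [abs_of_neg hαneg ▸ hα]
  -- sum of roots
  have hsum : (α : ℂ) + β + (starRingEnd ℂ) β = -(a : ℂ) := by
    have h1 := hfac 1
    have hm1 := hfac (-1)
    have h0 := hfac 0
    linear_combination (h1 + hm1) / 2 - h0
  -- β satisfies the cubic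
  have hcube : β ^ 3 + (a : ℂ) * β ^ 2 + (b : ℂ) * β + 1 = 0 := by
    rw [hfac β]; ring
  -- powers of β lie in ℤ[β]
  have key : ∀ n : ℕ, ∃ p q r : ℤ, β ^ n = (p : ℂ) + (q : ℂ) * β + (r : ℂ) * β ^ 2 := by
    intro n
    induction n with
    | zero => exact ⟨1, 0, 0, by simp⟩
    | succ n ih =>
      obtain ⟨p, q, r, h⟩ := ih
      refine ⟨-r, p - b * r, q - a * r, ?_⟩
      push_cast
      rw [pow_succ]
      linear_combination β * h + (r : ℂ) * hcube
  -- β^k is real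
  have him : (β ^ k).im = 0 := by
    have hpk : β ^ k = ((starRingEnd ℂ) β) ^ k := by
      field_simp at hroot
      rw [div_pow, div_eq_one_iff_eq (pow_ne_zero _ hγ0)] at hroot
      exact hroot
    have h1 : (starRingEnd ℂ) (β ^ k) = β ^ k := by
      rw [map_pow, ← hpk]
    exact Complex.conj_eq_iff_im.mp h1
  obtain ⟨p, q, r, hpqr⟩ := key k
  -- imaginary part relation
  have himeq : (q : ℝ) + 2 * r * β.re = 0 := by
    have h2 : (β ^ k).im = β.im * ((q : ℝ) + 2 * r * β.re) := by
      rw [hpqr]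
      simp [Complex.add_im, Complex.mul_im, pow_two, Complex.mul_re]
      ring
    rw [him] at h2
    rcases mul_eq_zero.mp h2.symm with h | h
    · exact absurd h hβ
    · exact h
  rcases eq_or_ne r 0 with hr | hr
  · -- r = 0 : then q = 0 and β^k = p is a small nonzero integer
    have hq : q = 0 := by
      have : (q : ℝ) = 0 := by rw [hr] at himeq; push_cast at himeq; linarith
      exact_mod_cast this
    rw [hq, hr] at hpqr
    simp at hpqr
    have hpne : p ≠ 0 := by
      rintro rfl
      simp at hpqr
      exact hβ0 hpqr.1
    have habs : ‖β ^ k‖ < 1 := by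
      rw [norm_pow]
      have hb1 : ‖β‖ < 1 := by
        rw [← Complex.sq_norm] at hnsq_lt
        nlinarith [norm_nonneg β]
      exact pow_lt_one₀ (norm_nonneg β) hb1 hk.ne'
    rw [hpqr] at habs
    have : (1 : ℝ) ≤ ‖(p : ℂ)‖ := by
      rw [Complex.norm_intCast]
      exact_mod_cast Int.one_le_abs hpne
    linarith
  · -- r ≠ 0 : then α is rational, contradicting |α| > 1 via the rational root theorem
    have hre : β.re = -(q : ℝ) / (2 * r) := by
      have hrR' : (r : ℝ) ≠ 0 := Int.cast_ne_zero.mpr hr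
      have h2r : (2 * (r : ℝ)) ≠ 0 := mul_ne_zero two_ne_zero hrR'
      field_simp
      linarith [himeq]
    have hsumR : α + 2 * β.re = -(a : ℝ) := by
      have h := hsum
      rw [add_assoc, Complex.add_conj] at h
      exact_mod_cast h
    have hrR : (r : ℝ) ≠ 0 := Int.cast_ne_zero.mpr hr
    set s : ℚ := -(a : ℚ) + (q : ℚ) / (r : ℚ) with hs
    have hαs : α = (s : ℝ) := by
      have h1 : ((s : ℚ) : ℝ) = -(a : ℝ) + (q : ℝ) / (r : ℝ) := by
        rw [hs]
        push_cast
        ring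
      rw [h1, hre] at *
      field_simp
      field_simp at hsumR
      linarith
    -- α is a root of the cubic
    have hαC := hfac (α : ℂ)
    have hαR : α ^ 3 + (a : ℝ) * α ^ 2 + (b : ℝ) * α + 1 = 0 := by
      have : ((α : ℂ)) ^ 3 + (a : ℂ) * (α : ℂ) ^ 2 + (b : ℂ) * (α : ℂ) + 1 = 0 := by
        rw [hαC]; ring
      exact_mod_cast this
    have hQ : s ^ 3 + (a : ℚ) * s ^ 2 + (b : ℚ) * s + 1 = 0 := by
      rw [hαs] at hαR
      exact_mod_cast hαR
    -- rational root theorem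
    set n : ℤ := s.num with hn
    set d : ℤ := (s.den : ℤ) with hd
    have hd0 : 0 < d := by rw [hd]; exact_mod_cast s.pos
    have hden0 : ((s.den : ℚ)) ≠ 0 := by
      exact_mod_cast s.den_ne_zero
    have hnum : (n : ℚ) = s * (d : ℚ) := by
      rw [hn, hd]
      push_cast
      exact (Rat.mul_den_eq_num s).symm
    have hZQ : (n : ℚ) ^ 3 + (a : ℚ) * (n : ℚ) ^ 2 * (d : ℚ) + (b : ℚ) * (n : ℚ) * (d : ℚ) ^ 2 + (d : ℚ) ^ 3 = 0 := by
      rw [hnum]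
      linear_combination ((d : ℚ)) ^ 3 * hQ
    have hZ : n ^ 3 + a * n ^ 2 * d + b * n * d ^ 2 + d ^ 3 = 0 := by
      exact_mod_cast hZQ
    have hcop : IsCoprime d n := by
      rw [hn, hd, Int.isCoprime_iff_gcd_eq_one]
      have := s.reduced
      simpa [Int.gcd, Nat.coprime_comm] using this
    have hdvd : d ∣ n ^ 3 := ⟨-(a * n ^ 2 + b * n * d + d ^ 2), by linear_combination hZ⟩
    have hdu : IsUnit d := (hcop.pow_right).isUnit_of_dvd hdvd
    have hd1 : d = 1 := by
      rcases Int.isUnit_iff.mp hdu with h | h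
      · exact h
      · omega
    have hmul : n * (n ^ 2 + a * n + b) = -1 := by
      rw [hd1] at hZ
      linear_combination hZ
    have hnu : IsUnit n := IsUnit.of_mul_eq_one (a := n) (-(n ^ 2 + a * n + b)) (by linarith)
    have hsn : (s : ℝ) = (n : ℝ) := by
      have hden1 : s.den = 1 := by
        rw [hd] at hd1
        exact_mod_cast hd1
      have h2 : ((s.num : ℚ)) = s := Rat.coe_int_num_of_den_eq_one hden1
      rw [hn]
      exact_mod_cast congrArg (fun x : ℚ => (x : ℝ)) h2.symm
    rcases Int.isUnit_iff.mp hnu with h | h <;>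
      rw [hαs, hsn, h] at hα <;> norm_num at hα
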